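/- For every integer k ≥ 0, the (q,r)-Whitney numbers of the second kind have the rational generating function: in the ring of formal power series ℝ[[T]], (Σ_{n≥0} W_{m,r}[n,k]_q T^n) · ∏_{j=0}^{k} (1 − [mj+r]_q T) = q^{m·binom(k,2)+kr} · T^k. (Note that W_{m,r}[n,k]_q = 0 for n < k, so the series on the left is Σ_{n≥k} W_{m,r}[n,k]_q T^n.) -/

import Mathlib

open Finset

/-- The `q`-integer `[s]_q = (q^s - 1)/(q - 1)` for an integer `s`. -/
noncomputable def qint (q : ℝ) (s : ℤ) : ℝ := (q ^ s - 1) / (q - 1)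

/-- The `(q,r)`-Whitney numbers of the second kind `W_{m,r}[n,k]_q`, with `r : ℤ` so
that both `W_{m,r}` and `W_{m,-r}` are covered: `W[0,0] = 1`, `W[n,k] = 0` for `k > n`,
and `W[n,k] = q^(m(k-1)+r) W[n-1,k-1] + [mk+r]_q W[n-1,k]`. -/
noncomputable def qWhitney2 (q : ℝ) (m : ℕ) (r : ℤ) : ℕ → ℕ → ℝ
  | 0, 0 => 1
  | 0, _ + 1 => 0
  | n + 1, 0 => qint q r * qWhitney2 q m r n 0
  | n + 1, k + 1 =>
      q ^ (m * k + r) * qWhitney2 q m r n k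
        + qint q (m * (k + 1) + r) * qWhitney2 q m r n (k + 1)

open PowerSeries in
lemma mul_one_sub_CX (f : ℕ → ℝ) (a : ℝ) :
    PowerSeries.mk f * (1 - PowerSeries.C (R := ℝ) a * PowerSeries.X) =
    PowerSeries.mk (fun n => Nat.rec (f 0) (fun n _ => f (n+1) - a * f n) n) := by
  ext n
  cases n with
  | zero => simp [mul_sub, mul_comm, ← mul_assoc]
  | succ n => simp [mul_sub, ← mul_assoc, mul_comm (PowerSeries.mk f) (PowerSeries.C (R := ℝ) a)]

lemma CX_mul_mk (b : ℝ) (f : ℕ → ℝ) :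
    PowerSeries.C (R := ℝ) b * PowerSeries.X * PowerSeries.mk f =
    PowerSeries.mk (fun n => Nat.rec 0 (fun n _ => b * f n) n) := by
  ext n
  cases n with
  | zero => simp
  | succ n => simp [mul_assoc, PowerSeries.coeff_C_mul, PowerSeries.coeff_succ_X_mul]


open PowerSeries in
theorem qWhitney2_rational_generating_function (q : ℝ) (hq : 0 < q) (hq1 : q ≠ 1) (m r : ℕ) (hm : 0 < m) (hr : 0 < r)
    (k : ℕ) :
    (PowerSeries.mk fun n => qWhitney2 q m (r : ℤ) n k) *
        ∏ j ∈ Finset.range (k + 1),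
          (1 - PowerSeries.C (R := ℝ) (qint q ((m : ℤ) * j + r)) * PowerSeries.X) =
      PowerSeries.C (R := ℝ) (q ^ (m * Nat.choose k 2 + k * r)) * PowerSeries.X ^ k := by
  induction k with
  | zero =>
    simp only [Finset.prod_range_one, Nat.cast_zero, mul_zero, zero_add, Nat.choose, pow_zero,
      Nat.mul_zero, Nat.zero_mul, map_one, one_mul, mul_one_sub_CX]
    ext n
    cases n with
    | zero => simp [qWhitney2]
    | succ n =>
      simp only [PowerSeries.coeff_mk, PowerSeries.coeff_one, Nat.succ_ne_zero, if_false]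
      show qWhitney2 q m r (n+1) 0 - qint q r * qWhitney2 q m r n 0 = 0
      rw [qWhitney2]; ring
  | succ k ih =>
    rw [Finset.prod_range_succ, ← mul_assoc, mul_comm (PowerSeries.mk _)
      (∏ j ∈ Finset.range (k + 1), _), mul_assoc, mul_one_sub_CX,
      mul_comm (∏ j ∈ Finset.range (k + 1), _)]
    have key : (PowerSeries.mk fun n =>
        Nat.rec (qWhitney2 q m (r:ℤ) 0 (k+1))
          (fun n _ => qWhitney2 q m (r:ℤ) (n+1) (k+1) -
            qint q ((m:ℤ) * (k+1) + r) * qWhitney2 q m (r:ℤ) n (k+1)) n) =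
        PowerSeries.C (R := ℝ) (q ^ (m * k + r)) * PowerSeries.X *
          (PowerSeries.mk fun n => qWhitney2 q m (r:ℤ) n k) := by
      rw [CX_mul_mk]
      ext n
      cases n with
      | zero => simp [qWhitney2]
      | succ n =>
        simp only [PowerSeries.coeff_mk]
        show qWhitney2 q m (r:ℤ) (n+1) (k+1) -
            qint q ((m:ℤ) * (k+1) + r) * qWhitney2 q m (r:ℤ) n (k+1) =
          q ^ (m * k + r) * qWhitney2 q m (r:ℤ) n k
        rw [qWhitney2]
        have : ((m : ℤ) * (k+1) + r) = (((m * (k+1) + r : ℕ)) : ℤ) := by push_cast; ring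
        have h2 : q ^ ((m:ℤ) * k + r) = q ^ (m * k + r) := by
          rw [show ((m:ℤ) * k + r) = (((m * k + r : ℕ)) : ℤ) by push_cast; ring, zpow_natCast]
        rw [h2]; push_cast; ring
    push_cast
    rw [key, mul_assoc, ih]
    have hexp : m * (k+1).choose 2 + (k+1)*r = (m*k+r) + (m*k.choose 2 + k*r) := by
      rw [Nat.choose_succ_succ, Nat.choose_one_right]; ring
    rw [hexp, pow_succ]
    simp only [pow_add, map_mul]
    ring
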